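/- Let ℓ ≥ 5 be a prime and r ≥ 1. If H is a subgroup of SL₂(ℤ/ℓʳℤ) whose image under the reduction map SL₂(ℤ/ℓʳℤ) → SL₂(ℤ/ℓℤ) is all of SL₂(ℤ/ℓℤ), then H = SL₂(ℤ/ℓʳℤ). -/

import Mathlib

open Matrix

section Helpers

variable {R : Type*} [CommRing R]

lemma det2 (c : R) (n : Matrix (Fin 2) (Fin 2) R) :
    (1 + c • n).det = 1 + c * (n 0 0 + n 1 1) + c * c * n.det := by
  simp [Matrix.det_fin_two, Matrix.add_apply, Matrix.smul_apply, Matrix.one_apply]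
  ring

lemma sqzero (n : Matrix (Fin 2) (Fin 2) R)
    (htr : n 0 0 + n 1 1 = 0) (hdet : n.det = 0) : n * n = 0 := by
  rw [Matrix.det_fin_two] at hdet
  ext i j
  fin_cases i <;> fin_cases j <;>
    simp only [Matrix.mul_apply, Fin.sum_univ_two, Matrix.zero_apply, Fin.zero_eta,
      Fin.mk_one, Fin.isValue]
  · linear_combination n 0 0 * htr - hdet
  · linear_combination n 0 1 * htr
  · linear_combination n 1 0 * htr
  · linear_combination n 1 1 * htr - hdet

lemma natCast_mul_matrix (a : ℕ) (n : Matrix (Fin 2) (Fin 2) R) :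
    ((a : Matrix (Fin 2) (Fin 2) R)) * n = ((a : R)) • n := by
  rw [← nsmul_eq_mul, Nat.cast_smul_eq_nsmul]

lemma natCast_pow_mul_matrix (a k : ℕ) (n : Matrix (Fin 2) (Fin 2) R) :
    ((a : Matrix (Fin 2) (Fin 2) R)) ^ k * n = ((a ^ k : ℕ) : R) • n := by
  rw [← Nat.cast_pow, natCast_mul_matrix]

lemma zmod_extract {m d : ℕ} [NeZero d] (hm : m ∣ d) (x : ZMod d)
    (hx : ZMod.castHom hm (ZMod m) x = 0) : ∃ y, x = (m : ZMod d) * y := by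
  rw [ZMod.castHom_apply, ← ZMod.natCast_val, ZMod.natCast_eq_zero_iff] at hx
  obtain ⟨c, hc⟩ := hx
  refine ⟨(c : ZMod d), ?_⟩
  rw [← ZMod.natCast_zmod_val x, hc]
  push_cast
  ring

end Helpers


section KeyPow

variable {A : Type*} [Ring A]

lemma key_pow (p s : ℕ) (hp : p.Prime) (h5 : 5 ≤ p)
    (hA : (p : A) ^ (s + 2) = 0) (n B : A) (hn : n * n = 0) :
    (1 + (p : A) ^ s * n + (p : A) ^ (s + 1) * B) ^ p
      = 1 + (p : A) ^ (s + 1) * n := by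
  set q : A := (p : A) with hq
  have hqc : ∀ a : A, Commute q a := fun a => (Nat.cast_commute p a)
  have hqk : ∀ (k : ℕ) (a : A), a * q ^ k = q ^ k * a :=
    fun k a => (((hqc a).pow_left k).symm).eq
  set Y : A := n + q * B with hY
  set X : A := q ^ s * Y with hX
  have hXeq : 1 + q ^ s * n + q ^ (s + 1) * B = X + 1 := by
    rw [hX, hY, mul_add, pow_succ, mul_assoc]; abel
  set D : A := n * B + B * n + q * (B * B) with hD
  have hY2 : Y * Y = q * D := by
    rw [hY, hD]
    have h1 : n * (q * B) = q * (n * B) := by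
      rw [← mul_assoc, (hqc n).symm.eq, mul_assoc]
    have h2 : q * B * (q * B) = q * (q * (B * B)) := by
      rw [mul_assoc, ← mul_assoc B q, (hqc B).symm.eq, mul_assoc, ← mul_assoc]
    rw [add_mul, mul_add, mul_add, hn, h1, h2, mul_assoc q B n]
    rw [zero_add, mul_add, mul_add]
    abel
  have hX2 : X * X = q ^ (2 * s + 1) * D := by
    rw [hX, mul_assoc, ← mul_assoc Y (q ^ s), hqk, mul_assoc, ← mul_assoc,
      ← pow_add, hY2, ← mul_assoc, ← pow_succ]
    ring_nf
  have hqX2 : q * (X * X) = 0 := by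
    rw [hX2, ← mul_assoc, ← pow_succ', show 2 * s + 1 + 1 = (s + 2) + s by ring,
      pow_add, hA, zero_mul, zero_mul]
  have hX4 : X ^ 4 = 0 := by
    have h4 : X ^ 4 = (X * X) * (X * X) := by
      rw [show (4:ℕ) = 2 + 2 from rfl, pow_add, pow_two]
    rw [h4, hX2, mul_assoc, ← mul_assoc D, hqk, mul_assoc, ← mul_assoc, ← pow_add,
      show 2 * s + 1 + (2 * s + 1) = (s + 2) + 3 * s by ring, pow_add, hA,
      zero_mul, zero_mul]
  have hXp : ∀ u : ℕ, X ^ (u + 4) = 0 := by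
    intro u
    rw [pow_add, hX4, mul_zero]
  have hbin := (Commute.one_right X).add_pow p
  rw [hXeq, hbin]
  obtain ⟨t, rfl⟩ : ∃ t, p = t + 2 := ⟨p - 2, by omega⟩
  rw [Finset.sum_range_succ', Finset.sum_range_succ']
  have hzero : ∀ i ∈ Finset.range (t + 1), X ^ (i + 1 + 1) * 1 ^ (t + 2 - (i + 1 + 1)) *
      ((t + 2).choose (i + 1 + 1) : A) = 0 := by
    intro i hi
    simp only [Finset.mem_range] at hi
    rw [one_pow, mul_one]
    rcases eq_or_lt_of_le (Nat.lt_succ_iff.mp hi) with heq | hlt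
    · rw [show i + 1 + 1 = (i + 1 + 1 - 4) + 4 by omega, hXp, zero_mul]
    · obtain ⟨c, hc⟩ := hp.dvd_choose_self (k := i + 1 + 1) (by omega) (by omega)
      rw [hc, Nat.cast_mul, show i + 1 + 1 = i + 2 from rfl, pow_add, pow_two]
      have hmv : (X ^ i * (X * X)) * (((t + 2 : ℕ) : A) * (c : A))
          = X ^ i * (q * (X * X)) * (c : A) := by
        rw [← mul_assoc, mul_assoc (X ^ i) (X * X) _,
          (Nat.cast_commute (t + 2) (X * X)).symm.eq, ← hq, ← mul_assoc]
      rw [hmv, hqX2, mul_zero, zero_mul]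
  rw [Finset.sum_eq_zero hzero, zero_add]
  have hq1 : X * ((t + 2 : ℕ) : A) = q ^ (s + 1) * n := by
    rw [(Nat.cast_commute (t + 2) X).symm.eq, ← hq, hX, hY, ← mul_assoc, ← pow_succ',
      mul_add, ← mul_assoc, ← pow_succ]
    rw [show s + 1 + 1 = s + 2 from rfl, hA, zero_mul, add_zero]
  simp only [zero_add, pow_zero, pow_one, one_pow, mul_one, one_mul, Nat.choose_zero_right,
    Nat.choose_one_right, Nat.cast_one, Nat.sub_zero]
  rw [hq1]
  abel

end KeyPow


section Lift

variable {ℓ : ℕ}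

lemma lift_mem (hℓ : ℓ.Prime) (h5 : 5 ≤ ℓ) (s : ℕ)
    (H : Subgroup (SpecialLinearGroup (Fin 2) (ZMod (ℓ ^ (s + 2)))))
    (hH : Subgroup.map (SpecialLinearGroup.map
        (ZMod.castHom (pow_dvd_pow ℓ (by omega : s + 1 ≤ s + 2))
          (ZMod (ℓ ^ (s + 1))))) H = ⊤)
    (n : Matrix (Fin 2) (Fin 2) (ZMod (ℓ ^ (s + 2))))
    (htr : n 0 0 + n 1 1 = 0) (hdet : n.det = 0)
    (h1 : (1 + ((ℓ ^ (s + 1) : ℕ) : ZMod (ℓ ^ (s + 2))) • n).det = 1) :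
    (⟨1 + ((ℓ ^ (s + 1) : ℕ) : ZMod (ℓ ^ (s + 2))) • n, h1⟩ :
      SpecialLinearGroup (Fin 2) (ZMod (ℓ ^ (s + 2)))) ∈ H := by
  haveI : NeZero (ℓ ^ (s + 2)) := ⟨pow_ne_zero _ hℓ.pos.ne'⟩
  set π := SpecialLinearGroup.map (n := Fin 2)
      (ZMod.castHom (pow_dvd_pow ℓ (by omega : s + 1 ≤ s + 2))
        (ZMod (ℓ ^ (s + 1)))) with hπ
  have hdetE : (1 + ((ℓ ^ s : ℕ) : ZMod (ℓ ^ (s + 2))) • n).det = 1 := by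
    rw [det2, htr, hdet]; ring
  set E : SpecialLinearGroup (Fin 2) (ZMod (ℓ ^ (s + 2))) :=
    ⟨1 + ((ℓ ^ s : ℕ) : ZMod (ℓ ^ (s + 2))) • n, hdetE⟩ with hE
  have hmem : π E ∈ Subgroup.map π H := by rw [hH]; exact Subgroup.mem_top _
  obtain ⟨h, hhH, hhE⟩ := Subgroup.mem_map.mp hmem
  have hkey : ∀ i j, ∃ b, (h : Matrix (Fin 2) (Fin 2) (ZMod (ℓ ^ (s + 2)))) i j
      = (E : Matrix (Fin 2) (Fin 2) (ZMod (ℓ ^ (s + 2)))) i j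
        + ((ℓ ^ (s + 1) : ℕ) : ZMod (ℓ ^ (s + 2))) * b := by
    intro i j
    have hc : ZMod.castHom (pow_dvd_pow ℓ (by omega : s + 1 ≤ s + 2))
        (ZMod (ℓ ^ (s + 1)))
        ((h : Matrix (Fin 2) (Fin 2) (ZMod (ℓ ^ (s + 2)))) i j
          - (E : Matrix (Fin 2) (Fin 2) (ZMod (ℓ ^ (s + 2)))) i j) = 0 := by
      have hcongr := congrArg (fun g : SpecialLinearGroup (Fin 2) (ZMod (ℓ ^ (s + 1))) =>
        (g : Matrix (Fin 2) (Fin 2) (ZMod (ℓ ^ (s + 1)))) i j) hhE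
      simp only [hπ, SpecialLinearGroup.map_apply_coe, RingHom.mapMatrix_apply,
        Matrix.map_apply] at hcongr
      rw [map_sub, hcongr, sub_self]
    obtain ⟨y, hy⟩ := zmod_extract _ _ hc
    exact ⟨y, by rw [← sub_eq_iff_eq_add']; rw [hy]⟩
  choose B hB using hkey
  have hval : (h : Matrix (Fin 2) (Fin 2) (ZMod (ℓ ^ (s + 2))))
      = 1 + (ℓ : Matrix (Fin 2) (Fin 2) (ZMod (ℓ ^ (s + 2)))) ^ s * n
        + (ℓ : Matrix (Fin 2) (Fin 2) (ZMod (ℓ ^ (s + 2)))) ^ (s + 1) * Matrix.of B := by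
    rw [natCast_pow_mul_matrix, natCast_pow_mul_matrix]
    ext i j
    simp only [Matrix.add_apply, Matrix.smul_apply, smul_eq_mul]
    rw [hB i j]
    rfl
  have hA : (ℓ : Matrix (Fin 2) (Fin 2) (ZMod (ℓ ^ (s + 2)))) ^ (s + 2) = 0 := by
    have h0 : ((ℓ ^ (s + 2) : ℕ) : ZMod (ℓ ^ (s + 2))) = 0 := ZMod.natCast_self _
    calc (ℓ : Matrix (Fin 2) (Fin 2) (ZMod (ℓ ^ (s + 2)))) ^ (s + 2)
        = (ℓ : Matrix (Fin 2) (Fin 2) (ZMod (ℓ ^ (s + 2)))) ^ (s + 2) * 1 :=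
          (mul_one _).symm
      _ = ((ℓ ^ (s + 2) : ℕ) : ZMod (ℓ ^ (s + 2))) • (1 : Matrix (Fin 2) (Fin 2) _) :=
          natCast_pow_mul_matrix _ _ _
      _ = 0 := by rw [h0, zero_smul]
  have hpow := key_pow ℓ s hℓ h5 hA n (Matrix.of B) (sqzero n htr hdet)
  have hfinal : ((h ^ ℓ : SpecialLinearGroup (Fin 2) (ZMod (ℓ ^ (s + 2))))
        : Matrix (Fin 2) (Fin 2) (ZMod (ℓ ^ (s + 2))))
      = 1 + ((ℓ ^ (s + 1) : ℕ) : ZMod (ℓ ^ (s + 2))) • n := by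
    rw [Matrix.SpecialLinearGroup.coe_pow, hval, hpow, natCast_pow_mul_matrix]
  have heq : (⟨1 + ((ℓ ^ (s + 1) : ℕ) : ZMod (ℓ ^ (s + 2))) • n, h1⟩ :
      SpecialLinearGroup (Fin 2) (ZMod (ℓ ^ (s + 2)))) = h ^ ℓ := Subtype.ext hfinal.symm
  rw [heq]
  exact pow_mem hhH ℓ

end Lift
section Rest

variable {ℓ : ℕ}

lemma one_add_smul_mul {R : Type*} [CommRing R] (c : R) (hc : c * c = 0)
    (x y : Matrix (Fin 2) (Fin 2) R) :
    (1 + c • x) * (1 + c • y) = 1 + c • (x + y) := by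
  rw [add_mul, mul_add, mul_add, one_mul, mul_one, smul_mul_smul_comm, hc, zero_smul,
    smul_add]
  simp only [one_mul]
  abel

lemma ker_le (hℓ : ℓ.Prime) (h5 : 5 ≤ ℓ) (s : ℕ)
    (H : Subgroup (SpecialLinearGroup (Fin 2) (ZMod (ℓ ^ (s + 2)))))
    (hH : Subgroup.map (SpecialLinearGroup.map
        (ZMod.castHom (pow_dvd_pow ℓ (by omega : s + 1 ≤ s + 2))
          (ZMod (ℓ ^ (s + 1))))) H = ⊤) :
    (SpecialLinearGroup.map (n := Fin 2)
        (ZMod.castHom (pow_dvd_pow ℓ (by omega : s + 1 ≤ s + 2))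
          (ZMod (ℓ ^ (s + 1))))).ker ≤ H := by
  haveI : NeZero (ℓ ^ (s + 2)) := ⟨pow_ne_zero _ hℓ.pos.ne'⟩
  intro g hg
  rw [MonoidHom.mem_ker] at hg
  -- extract S with g.val = 1 + c • S
  have hkey : ∀ i j, ∃ b, (g : Matrix (Fin 2) (Fin 2) (ZMod (ℓ ^ (s + 2)))) i j
      = (1 : Matrix (Fin 2) (Fin 2) (ZMod (ℓ ^ (s + 2)))) i j
        + ((ℓ ^ (s + 1) : ℕ) : ZMod (ℓ ^ (s + 2))) * b := by
    intro i j
    have hcongr := congrArg (fun x : SpecialLinearGroup (Fin 2) (ZMod (ℓ ^ (s + 1))) =>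
      (x : Matrix (Fin 2) (Fin 2) (ZMod (ℓ ^ (s + 1)))) i j) hg
    simp only [SpecialLinearGroup.map_apply_coe, RingHom.mapMatrix_apply,
      Matrix.map_apply, SpecialLinearGroup.coe_one] at hcongr
    have hone : ZMod.castHom (pow_dvd_pow ℓ (by omega : s + 1 ≤ s + 2))
        (ZMod (ℓ ^ (s + 1))) ((1 : Matrix (Fin 2) (Fin 2) (ZMod (ℓ ^ (s + 2)))) i j)
        = (1 : Matrix (Fin 2) (Fin 2) (ZMod (ℓ ^ (s + 1)))) i j := by
      by_cases hij : i = j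
      · rw [hij, Matrix.one_apply_eq, Matrix.one_apply_eq, _root_.map_one]
      · rw [Matrix.one_apply_ne hij, Matrix.one_apply_ne hij, _root_.map_zero]
    have hc : ZMod.castHom (pow_dvd_pow ℓ (by omega : s + 1 ≤ s + 2))
        (ZMod (ℓ ^ (s + 1)))
        ((g : Matrix (Fin 2) (Fin 2) (ZMod (ℓ ^ (s + 2)))) i j
          - (1 : Matrix (Fin 2) (Fin 2) (ZMod (ℓ ^ (s + 2)))) i j) = 0 := by
      rw [map_sub, hcongr, hone]
      simp
    obtain ⟨y, hy⟩ := zmod_extract _ _ hc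
    exact ⟨y, by rw [← sub_eq_iff_eq_add']; rw [hy]⟩
  choose S hS using hkey
  set c : ZMod (ℓ ^ (s + 2)) := ((ℓ ^ (s + 1) : ℕ) : ZMod (ℓ ^ (s + 2))) with hcdef
  have hval : (g : Matrix (Fin 2) (Fin 2) (ZMod (ℓ ^ (s + 2)))) = 1 + c • Matrix.of S := by
    ext i j
    simp only [Matrix.add_apply, Matrix.smul_apply, smul_eq_mul]
    rw [hS i j]
    rfl
  have hc2 : c * c = 0 := by
    rw [hcdef, ← Nat.cast_mul, ← pow_add, ZMod.natCast_eq_zero_iff]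
    exact pow_dvd_pow ℓ (by omega)
  have htr0 : c * (S 0 0 + S 1 1) = 0 := by
    have hdet := g.prop
    rw [hval] at hdet
    rw [det2] at hdet
    rw [hc2, zero_mul, add_zero] at hdet
    have := congrArg (fun z => z - 1) hdet
    simpa using this
  -- the three square-zero pieces
  set n₁ : Matrix (Fin 2) (Fin 2) (ZMod (ℓ ^ (s + 2))) := !![0, S 0 1 + S 0 0; 0, 0]
    with hn₁
  set n₂ : Matrix (Fin 2) (Fin 2) (ZMod (ℓ ^ (s + 2))) := !![0, 0; S 1 0 - S 0 0, 0]
    with hn₂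
  set n₃ : Matrix (Fin 2) (Fin 2) (ZMod (ℓ ^ (s + 2))) := !![S 0 0, -(S 0 0); S 0 0, -(S 0 0)]
    with hn₃
  have htr₁ : n₁ 0 0 + n₁ 1 1 = 0 := by simp [hn₁]
  have hdet₁ : n₁.det = 0 := by simp [hn₁, Matrix.det_fin_two_of]
  have htr₂ : n₂ 0 0 + n₂ 1 1 = 0 := by simp [hn₂]
  have hdet₂ : n₂.det = 0 := by simp [hn₂, Matrix.det_fin_two_of]
  have htr₃ : n₃ 0 0 + n₃ 1 1 = 0 := by simp [hn₃]
  have hdet₃ : n₃.det = 0 := by simp [hn₃, Matrix.det_fin_two_of]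
  have hd₁ : (1 + c • n₁).det = 1 := by rw [det2, htr₁, hdet₁]; ring
  have hd₂ : (1 + c • n₂).det = 1 := by rw [det2, htr₂, hdet₂]; ring
  have hd₃ : (1 + c • n₃).det = 1 := by rw [det2, htr₃, hdet₃]; ring
  have he₁ := lift_mem hℓ h5 s H hH n₁ htr₁ hdet₁ hd₁
  have he₂ := lift_mem hℓ h5 s H hH n₂ htr₂ hdet₂ hd₂
  have he₃ := lift_mem hℓ h5 s H hH n₃ htr₃ hdet₃ hd₃
  have hprod : g = (⟨1 + c • n₁, hd₁⟩ * ⟨1 + c • n₂, hd₂⟩ * ⟨1 + c • n₃, hd₃⟩ :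
      SpecialLinearGroup (Fin 2) (ZMod (ℓ ^ (s + 2)))) := by
    apply Subtype.ext
    erw [Matrix.SpecialLinearGroup.coe_mul, Matrix.SpecialLinearGroup.coe_mul]
    show (g : Matrix (Fin 2) (Fin 2) (ZMod (ℓ ^ (s + 2))))
      = (1 + c • n₁) * (1 + c • n₂) * (1 + c • n₃)
    rw [one_add_smul_mul c hc2, one_add_smul_mul c hc2, hval]
    congr 1
    ext i j
    fin_cases i <;> fin_cases j <;>
      simp only [Matrix.smul_apply, Matrix.add_apply, Matrix.of_apply, smul_eq_mul,
        hn₁, hn₂, hn₃, Matrix.cons_val', Matrix.cons_val_zero, Matrix.cons_val_one,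
        Matrix.head_cons, Matrix.head_fin_const, Matrix.empty_val',
        Matrix.cons_val_fin_one, Fin.zero_eta, Fin.mk_one, Fin.isValue]
    · ring
    · ring
    · ring
    · linear_combination htr0
  rw [hprod]
  exact mul_mem (mul_mem he₁ he₂) he₃

end Rest
section Final

variable {ℓ : ℕ}

lemma SLmap_comp {R S T : Type*} [CommRing R] [CommRing S] [CommRing T]
    (f : S →+* T) (g : R →+* S) :
    (SpecialLinearGroup.map (n := Fin 2) f).comp (SpecialLinearGroup.map g)
      = SpecialLinearGroup.map (f.comp g) := by
  ext x i j
  simp [SpecialLinearGroup.map_apply_coe]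

lemma serre_lift (hℓ : ℓ.Prime) (h5 : 5 ≤ ℓ) :
    ∀ r, 1 ≤ r → ∀ (hd : ℓ ∣ ℓ ^ r)
      (H : Subgroup (SpecialLinearGroup (Fin 2) (ZMod (ℓ ^ r)))),
      Subgroup.map (SpecialLinearGroup.map (ZMod.castHom hd (ZMod ℓ))) H = ⊤ → H = ⊤ := by
  intro r hr
  induction r, hr using Nat.le_induction with
  | base =>
    intro hd H hs
    haveI : NeZero (ℓ ^ 1) := ⟨pow_ne_zero _ hℓ.pos.ne'⟩
    set f := SpecialLinearGroup.map (n := Fin 2) (ZMod.castHom hd (ZMod ℓ)) with hf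
    have hker : f.ker = ⊥ := by
      rw [Subgroup.eq_bot_iff_forall]
      intro g hg
      rw [MonoidHom.mem_ker] at hg
      apply Subtype.ext
      ext i j
      have hcongr := congrArg (fun x : SpecialLinearGroup (Fin 2) (ZMod ℓ) =>
        (x : Matrix (Fin 2) (Fin 2) (ZMod ℓ)) i j) hg
      simp only [hf, SpecialLinearGroup.map_apply_coe, RingHom.mapMatrix_apply,
        Matrix.map_apply, SpecialLinearGroup.coe_one] at hcongr
      have hone : ZMod.castHom hd (ZMod ℓ)
          ((1 : Matrix (Fin 2) (Fin 2) (ZMod (ℓ ^ 1))) i j)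
          = (1 : Matrix (Fin 2) (Fin 2) (ZMod ℓ)) i j := by
        by_cases hij : i = j
        · rw [hij, Matrix.one_apply_eq, Matrix.one_apply_eq, _root_.map_one]
        · rw [Matrix.one_apply_ne hij, Matrix.one_apply_ne hij, _root_.map_zero]
      have hzero : ZMod.castHom hd (ZMod ℓ)
          ((g : Matrix (Fin 2) (Fin 2) (ZMod (ℓ ^ 1))) i j
            - (1 : Matrix (Fin 2) (Fin 2) (ZMod (ℓ ^ 1))) i j) = 0 := by
        rw [map_sub, hcongr, hone]
        simp
      obtain ⟨y, hy⟩ := zmod_extract hd _ hzero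
      have hl0 : (ℓ : ZMod (ℓ ^ 1)) = 0 := by
        rw [ZMod.natCast_eq_zero_iff, pow_one]
      rw [hl0, zero_mul, sub_eq_zero] at hy
      exact hy
    have := Subgroup.comap_map_eq (f := f) (H := H)
    rw [hs, Subgroup.comap_top, hker, sup_bot_eq] at this
    exact this.symm
  | succ m hm ih =>
    intro hd H hs
    obtain ⟨s, rfl⟩ : ∃ s, m = s + 1 := ⟨m - 1, by omega⟩
    set π := SpecialLinearGroup.map (n := Fin 2)
        (ZMod.castHom (pow_dvd_pow ℓ (by omega : s + 1 ≤ s + 2))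
          (ZMod (ℓ ^ (s + 1)))) with hπ
    have hd' : ℓ ∣ ℓ ^ (s + 1) := dvd_pow_self ℓ (by omega)
    have hcomp : Subgroup.map
        (SpecialLinearGroup.map (ZMod.castHom hd' (ZMod ℓ))) (Subgroup.map π H) = ⊤ := by
      rw [Subgroup.map_map, hπ, SLmap_comp]
      have heq : (ZMod.castHom hd' (ZMod ℓ)).comp
          (ZMod.castHom (pow_dvd_pow ℓ (by omega : s + 1 ≤ s + 2)) (ZMod (ℓ ^ (s + 1))))
          = ZMod.castHom hd (ZMod ℓ) := RingHom.ext_zmod _ _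
      rw [heq]
      exact hs
    have hπH : Subgroup.map π H = ⊤ := ih hd' (Subgroup.map π H) hcomp
    have hker := ker_le hℓ h5 s H hπH
    have hcm := Subgroup.comap_map_eq (f := π) (H := H)
    rw [hπH, Subgroup.comap_top, sup_of_le_left hker] at hcm
    exact hcm.symm

end Final

/-- Serre's lifting lemma: a subgroup of `SL₂(ℤ/ℓʳℤ)` surjecting onto
`SL₂(ℤ/ℓℤ)` under reduction mod `ℓ` is everything. -/
theorem stmt_3 (ℓ r : ℕ) (hℓ : ℓ.Prime) (h5 : 5 ≤ ℓ) (hr : 1 ≤ r)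
    (H : Subgroup (Matrix.SpecialLinearGroup (Fin 2) (ZMod (ℓ ^ r))))
    (hsurj : Subgroup.map
      (Matrix.SpecialLinearGroup.map
        (ZMod.castHom (dvd_pow_self ℓ (Nat.one_le_iff_ne_zero.mp hr)) (ZMod ℓ))) H = ⊤) :
    H = ⊤ :=
  serre_lift hℓ h5 r hr _ H hsurj
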